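/- Let S ⊆ ℝ^d be closed and C ⊆ ℝ^d a closed convex full-dimensional S-free set. If C = {x : αᵀx ≤ α₀ for all (α, α₀) ∈ I} for some I ⊆ ℝ^d × ℝ and each inequality (α, α₀) ∈ I admits an exposing sequence contained in S, then C is a maximal S-free set. -/
import Mathlib


open scoped RealInnerProductSpace

lemma aux_mem_closure_interior {E : Type*} [NormedAddCommGroup E] [NormedSpace ℝ E]
    {s : Set E} (hs : Convex ℝ s) {z z₀ : E} (hz : z ∈ s) (hz₀ : z₀ ∈ interior s) :
    z ∈ closure (interior s) := by
  have hmem : ∀ n : ℕ, z + (1 / (n + 1) : ℝ) • (z₀ - z) ∈ interior s := by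
    intro n
    refine hs.add_smul_sub_mem_interior hz hz₀ ⟨by positivity, ?_⟩
    rw [div_le_one (by positivity)]
    linarith [Nat.cast_nonneg (α := ℝ) n]
  have htend : Filter.Tendsto (fun n : ℕ => z + (1 / (n + 1) : ℝ) • (z₀ - z))
      Filter.atTop (nhds z) := by
    have h0 : Filter.Tendsto (fun n : ℕ => (1 / (n + 1) : ℝ)) Filter.atTop (nhds 0) :=
      tendsto_one_div_add_atTop_nhds_zero_nat
    have := (tendsto_const_nhds (x := z)).add (h0.smul_const (z₀ - z))
    simpa using this
  exact mem_closure_of_tendsto htend (Filter.Eventually.of_forall hmem)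

theorem stmt14 (d : ℕ)
    (S C : Set (EuclideanSpace ℝ (Fin d)))
    (hS : IsClosed S) (hCclosed : IsClosed C) (hCconv : Convex ℝ C)
    (hfull : (interior C).Nonempty) (hfree : interior C ∩ S = ∅)
    (I : Set (EuclideanSpace ℝ (Fin d) × ℝ))
    (hC : C = {x | ∀ p ∈ I, ⟪p.1, x⟫ ≤ p.2})
    (hexp : ∀ p ∈ I, p.1 ≠ 0 ∧ ∃ x : ℕ → EuclideanSpace ℝ (Fin d),
      (∀ t, x t ∈ S) ∧
      ∀ (δ : ℕ → EuclideanSpace ℝ (Fin d)) (δ₀ : ℕ → ℝ),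
        (∀ t, ‖δ t‖ = ‖p.1‖) →
        (∀ t, ∀ z ∈ C, ⟪δ t, z⟫ ≤ δ₀ t) →
        (∀ t, δ₀ t ≤ ⟪δ t, x t⟫) →
        Filter.Tendsto (fun t => (δ t, δ₀ t)) Filter.atTop (nhds (p.1, p.2))) :
    ∀ K : Set (EuclideanSpace ℝ (Fin d)),
      IsClosed K → Convex ℝ K → interior K ∩ S = ∅ → C ⊆ K → K = C := by
  intro K hKcl hKconv hKfree hCK
  refine Set.Subset.antisymm ?_ hCK
  intro y hy
  rw [hC]
  intro p hp
  obtain ⟨hα, x, hxS, hseq⟩ := hexp p hp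
  obtain ⟨z₀, hz₀⟩ := hfull
  have hz₀K : z₀ ∈ interior K := interior_mono hCK hz₀
  -- separation for each t
  have hsep : ∀ t : ℕ, ∃ v : EuclideanSpace ℝ (Fin d), v ≠ 0 ∧
      ∀ z ∈ K, ⟪v, z⟫ ≤ ⟪v, x t⟫ := by
    intro t
    have hxt : x t ∉ interior K := by
      intro h
      exact absurd hKfree (by
        apply Set.Nonempty.ne_empty
        exact ⟨x t, h, hxS t⟩)
    obtain ⟨f, hf⟩ := geometric_hahn_banach_open_point hKconv.interior isOpen_interior hxt
    set v := (InnerProductSpace.toDual ℝ (EuclideanSpace ℝ (Fin d))).symm f with hv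
    have hvf : ∀ z, ⟪v, z⟫ = f z := fun z =>
      InnerProductSpace.toDual_symm_apply
    refine ⟨v, ?_, ?_⟩
    · intro h0
      have h1 := hf z₀ hz₀K
      rw [← hvf z₀, ← hvf (x t), h0] at h1
      simp at h1
    · intro z hz
      have hzc : z ∈ closure (interior K) := aux_mem_closure_interior hKconv hz hz₀K
      have hcl : closure (interior K) ⊆ {w | ⟪v, w⟫ ≤ ⟪v, x t⟫} := by
        apply closure_minimal
        · intro w hw
          have h := hf w hw
          rw [← hvf w, ← hvf (x t)] at h
          exact h.le
        · exact isClosed_le (Continuous.inner continuous_const continuous_id)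
            continuous_const
      exact hcl hzc
  choose v hv0 hvK using hsep
  set δ : ℕ → EuclideanSpace ℝ (Fin d) := fun t => (‖p.1‖ / ‖v t‖) • v t with hδdef
  set δ₀ : ℕ → ℝ := fun t => ⟪δ t, x t⟫ with hδ₀def
  have hcpos : ∀ t, 0 < ‖p.1‖ / ‖v t‖ := fun t =>
    div_pos (norm_pos_iff.mpr hα) (norm_pos_iff.mpr (hv0 t))
  have hnorm : ∀ t, ‖δ t‖ = ‖p.1‖ := by
    intro t
    have h1 : ‖v t‖ ≠ 0 := norm_ne_zero_iff.mpr (hv0 t)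
    rw [hδdef]
    simp only [norm_smul, Real.norm_eq_abs, abs_of_pos (hcpos t)]
    field_simp
  have hvalid : ∀ t, ∀ z ∈ C, ⟪δ t, z⟫ ≤ δ₀ t := by
    intro t z hz
    simp only [hδ₀def, hδdef, real_inner_smul_left]
    exact mul_le_mul_of_nonneg_left (hvK t z (hCK hz)) (hcpos t).le
  have hexpose : ∀ t, δ₀ t ≤ ⟪δ t, x t⟫ := fun t => le_refl _
  have htend := hseq δ δ₀ hnorm hvalid hexpose
  have hδt : Filter.Tendsto δ Filter.atTop (nhds p.1) :=
    ((continuous_fst.tendsto (p.1, p.2)).comp htend)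
  have hδ₀t : Filter.Tendsto δ₀ Filter.atTop (nhds p.2) :=
    ((continuous_snd.tendsto (p.1, p.2)).comp htend)
  have hinner : Filter.Tendsto (fun t => ⟪δ t, y⟫) Filter.atTop (nhds ⟪p.1, y⟫) :=
    hδt.inner tendsto_const_nhds
  have hle : ∀ t, ⟪δ t, y⟫ ≤ δ₀ t := by
    intro t
    simp only [hδ₀def, hδdef, real_inner_smul_left]
    exact mul_le_mul_of_nonneg_left (hvK t y hy) (hcpos t).le
  exact le_of_tendsto_of_tendsto' hinner hδ₀t hle
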